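/- Let A be an associative algebra with center Z(A), and let δ be a locally nilpotent derivation of A such that A is δ-simple. Then Z(A) is δ-stable, and Z(A) is δ-simple as a commutative algebra (for the restricted derivation). -/
import Mathlib


/-- for a δ-simple algebra with δ locally nilpotent, the center is
δ-stable and δ-simple (as a commutative algebra, stated via subsets of the
center that are ideals of the center). -/
theorem stmt8 (A : Type*) [Ring A] [Nontrivial A]
    (δ : A → A) (hadd : ∀ a b, δ (a + b) = δ a + δ b)
    (hleib : ∀ a b, δ (a * b) = δ a * b + a * δ b)
    (hln : ∀ a : A, ∃ n : ℕ, δ^[n] a = 0)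
    (hsimple : ∀ I : TwoSidedIdeal A, (∀ x ∈ I, δ x ∈ I) → I = ⊥ ∨ I = ⊤) :
    (∀ z ∈ Set.center A, δ z ∈ Set.center A) ∧
    (∀ S : Set A, S ⊆ Set.center A →
      (0 : A) ∈ S → (∀ a b, a ∈ S → b ∈ S → a + b ∈ S) →
      (∀ z ∈ Set.center A, ∀ s ∈ S, z * s ∈ S) →
      (∀ s ∈ S, δ s ∈ S) →
      S = {0} ∨ S = Set.center A) := by
  -- part 1: center is δ-stable
  have hcen : ∀ z ∈ Set.center A, δ z ∈ Set.center A := by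
    intro z hz
    rw [Semigroup.mem_center_iff] at hz ⊢
    intro g
    have key : δ z * g + z * δ g = δ g * z + g * δ z := by
      rw [← hleib, ← hleib, hz g]
    rw [hz (δ g)] at key
    rw [add_comm (z * δ g) (g * δ z)] at key
    exact (add_right_cancel key).symm
  refine ⟨hcen, ?_⟩
  intro S hSc h0 haddS hmulS hdS
  by_cases hS : S = {0}
  · exact Or.inl hS
  right
  -- pick nonzero element of S
  have : ∃ s ∈ S, s ≠ 0 := by
    by_contra h
    push_neg at h
    apply hS
    ext x
    simp only [Set.mem_singleton_iff]
    exact ⟨fun hx => h x hx, fun hx => hx ▸ h0⟩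
  obtain ⟨s, hsS, hs0⟩ := this
  -- iterates of δ stay in S and in the center
  have hiterS : ∀ k, δ^[k] s ∈ S := by
    intro k; induction k with
    | zero => exact hsS
    | succ n ih => rw [Function.iterate_succ_apply']; exact hdS _ ih
  have hiterC : ∀ k, ∀ z ∈ Set.center A, δ^[k] z ∈ Set.center A := by
    intro k; induction k with
    | zero => exact fun z hz => hz
    | succ n ih =>
      intro z hz
      rw [Function.iterate_succ_apply']
      exact hcen _ (ih z hz)
  -- minimal n with δ^[n] s = 0
  have hex : ∃ n, δ^[n] s = 0 := hln s
  classical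
  set n := Nat.find hex with hn
  have hn0 : n ≠ 0 := by
    intro h
    have := Nat.find_spec hex
    rw [← hn, h] at this
    exact hs0 this
  obtain ⟨m, hm⟩ := Nat.exists_eq_succ_of_ne_zero hn0
  set a := δ^[m] s with ha
  have haS : a ∈ S := hiterS m
  have haC : a ∈ Set.center A := hiterC m s (hSc hsS)
  have ha0 : a ≠ 0 := by
    intro h
    exact Nat.find_min hex (by omega : m < n) h
  have hda : δ a = 0 := by
    have := Nat.find_spec hex
    rw [← hn, hm, Function.iterate_succ_apply'] at this
    exact this
  have hacomm : ∀ g : A, g * a = a * g := Semigroup.mem_center_iff.mp haC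
  -- the two-sided ideal a * A
  set I : TwoSidedIdeal A := TwoSidedIdeal.mk' {x | ∃ c, x = a * c}
    ⟨0, by rw [mul_zero]⟩
    (fun {x y} ⟨c, hc⟩ ⟨d, hd⟩ => ⟨c + d, by rw [hc, hd, mul_add]⟩)
    (fun {x} ⟨c, hc⟩ => ⟨-c, by rw [hc, mul_neg]⟩)
    (fun {x y} ⟨c, hc⟩ => ⟨x * c, by rw [hc, ← mul_assoc, hacomm x, mul_assoc]⟩)
    (fun {x y} ⟨c, hc⟩ => ⟨c * y, by rw [hc, mul_assoc]⟩) with hI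
  have hmemI : ∀ x : A, x ∈ I ↔ ∃ c, x = a * c := by
    intro x; rw [hI]; exact TwoSidedIdeal.mem_mk' _ _ _ _ _ _ x
  have hIδ : ∀ x ∈ I, δ x ∈ I := by
    intro x hx
    obtain ⟨c, hc⟩ := (hmemI x).mp hx
    exact (hmemI _).mpr ⟨δ c, by rw [hc, hleib, hda, zero_mul, zero_add]⟩
  rcases hsimple I hIδ with hbot | htop
  · exfalso
    have : a ∈ I := (hmemI a).mpr ⟨1, (mul_one a).symm⟩
    rw [hbot, TwoSidedIdeal.mem_bot] at this
    exact ha0 this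
  -- 1 ∈ I, so a*b = 1 for some b
  have h1 : (1 : A) ∈ I := htop ▸ trivial
  obtain ⟨b, hb⟩ := (hmemI 1).mp h1
  have hab : a * b = 1 := hb.symm
  have hba : b * a = 1 := by rw [hacomm b, hab]
  -- b is central
  have hbC : b ∈ Set.center A := by
    rw [Semigroup.mem_center_iff]
    intro g
    have hinner : a * (g * b) = g * (a * b) := by
      rw [← mul_assoc, ← hacomm g, mul_assoc]
    calc g * b = (b * a) * (g * b) := by rw [hba, one_mul]
      _ = b * (a * (g * b)) := by rw [mul_assoc]
      _ = b * (g * (a * b)) := by rw [hinner]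
      _ = b * g := by rw [hab, mul_one]
  -- conclude S = center
  apply Set.Subset.antisymm hSc
  intro z hz
  have hbz : b * z ∈ Set.center A := Set.mul_mem_center hbC hz
  have : (b * z) * a ∈ S := hmulS _ hbz a haS
  have heq : (b * z) * a = z := by
    calc (b * z) * a = b * (z * a) := by rw [mul_assoc]
      _ = b * (a * z) := by rw [hacomm z]
      _ = (b * a) * z := by rw [mul_assoc]
      _ = z := by rw [hba, one_mul]
  rwa [heq] at this
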